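/- Let G be a finite simple graph and let s be an integer with 1 ≤ s ≤ ω(G) (so that N_s(G) > 0). Then G contains a path with at least (s+1)·N_{s+1}(G)/N_s(G) + s - 1 edges; equivalently, there is a path in G of length l (number of edges) satisfying N_s(G)·(l - s + 1) ≥ (s+1)·N_{s+1}(G). -/

import Mathlib

namespace PathCliqueProof

open Finset SimpleGraph.Walk

set_option maxHeartbeats 1600000

variable {V : Type*} [Fintype V] [DecidableEq V]

section Defs
variable (G : SimpleGraph V)

def lenSet (A : Finset V) : Set ℕ :=
  {n : ℕ | ∃ (u v : V) (p : G.Walk u v), p.IsPath ∧ (∀ x ∈ p.support, x ∈ A) ∧ p.length = n}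

noncomputable def pml (A : Finset V) : ℕ := sSup (lenSet G A)

lemma lenSet_bddAbove (A : Finset V) : BddAbove (lenSet G A) := by
  refine ⟨A.card, fun n hn => ?_⟩
  obtain ⟨u, v, p, hp, hs, rfl⟩ := hn
  have h1 : p.support.toFinset ⊆ A := fun x hx => hs x (List.mem_toFinset.mp hx)
  have h2 : p.support.toFinset.card = p.length + 1 := by
    rw [List.toFinset_card_of_nodup hp.support_nodup, SimpleGraph.Walk.length_support]
  have := Finset.card_le_card h1
  omega

lemma le_pml {A : Finset V} {u v : V} {p : G.Walk u v} (hp : p.IsPath)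
    (hs : ∀ x ∈ p.support, x ∈ A) : p.length ≤ pml G A :=
  le_csSup (lenSet_bddAbove G A) ⟨u, v, p, hp, hs, rfl⟩

lemma pml_spec {A : Finset V} (hA : A.Nonempty) :
    ∃ (u v : V) (p : G.Walk u v), p.IsPath ∧ (∀ x ∈ p.support, x ∈ A) ∧ p.length = pml G A := by
  obtain ⟨a, ha⟩ := hA
  have hne : (lenSet G A).Nonempty :=
    ⟨0, a, a, SimpleGraph.Walk.nil, by simp, by simpa using ha, rfl⟩
  exact Nat.sSup_mem hne (lenSet_bddAbove G A)

lemma pml_mono {A B : Finset V} (hA : A.Nonempty) (h : A ⊆ B) : pml G A ≤ pml G B := by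
  obtain ⟨a, ha⟩ := hA
  refine csSup_le_csSup (lenSet_bddAbove G B)
    ⟨0, a, a, SimpleGraph.Walk.nil, by simp, by simpa using ha, rfl⟩ ?_
  rintro n ⟨u, v, p, hp, hs, rfl⟩
  exact ⟨u, v, p, hp, fun x hx => h (hs x hx), rfl⟩

lemma clique_path (T : Finset V) (hT : T.Nonempty) (hc : G.IsClique (T : Set V)) :
    ∃ (u v : V) (p : G.Walk u v), p.IsPath ∧ (∀ x ∈ p.support, x ∈ T) ∧
      p.length + 1 = T.card := by
  classical
  induction T using Finset.strongInduction with
  | _ T IH =>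
    obtain ⟨x, hx⟩ := hT
    by_cases hT' : (T.erase x).Nonempty
    · obtain ⟨u, v, p, hp, hs, hlen⟩ := IH (T.erase x) (Finset.erase_ssubset hx) hT'
        (hc.subset (by simp [Finset.coe_subset]))
      have hu : u ∈ T.erase x := hs u p.start_mem_support
      have hadj : G.Adj x u := by
        refine hc hx (Finset.mem_of_mem_erase hu) ?_
        exact fun h => (Finset.ne_of_mem_erase hu (h.symm)).elim
      refine ⟨x, v, SimpleGraph.Walk.cons hadj p, ?_, ?_, ?_⟩
      · rw [SimpleGraph.Walk.cons_isPath_iff]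
        exact ⟨hp, fun h => (Finset.notMem_erase x T) (hs x h)⟩
      · intro y hy
        rcases List.mem_cons.mp (by simpa using hy) with rfl | hy'
        · exact hx
        · exact Finset.mem_of_mem_erase (hs y hy')
      · rw [SimpleGraph.Walk.length_cons]
        rw [Finset.card_erase_of_mem hx] at hlen
        have : 1 ≤ T.card := Finset.card_pos.mpr ⟨x, hx⟩
        omega
    · have hT1 : T = {x} := by
        apply Finset.eq_singleton_iff_unique_mem.mpr
        refine ⟨hx, fun y hy => ?_⟩
        by_contra hne
        exact hT' ⟨y, Finset.mem_erase.mpr ⟨hne, hy⟩⟩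
      refine ⟨x, x, SimpleGraph.Walk.nil, by simp, ?_, by simp [hT1]⟩
      intro y hy; simp at hy; simp [hy, hx]


open scoped Classical in
noncomputable def cc (A : Finset V) (j : ℕ) : ℕ :=
  (Finset.univ.filter (fun T : Finset V => G.IsNClique j T ∧ T ⊆ A)).card

open scoped Classical in
lemma cc_pos {A : Finset V} {j : ℕ} {T : Finset V} (hT : G.IsNClique j T) (hTA : T ⊆ A) :
    1 ≤ cc G A j :=
  Finset.card_pos.mpr ⟨T, by simp [cc, hT, hTA]⟩

lemma clique_erase {j : ℕ} {T : Finset V} (hT : G.IsNClique (j+1) T) :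
    ∃ x ∈ T, G.IsNClique j (T.erase x) := by
  have hne : T.Nonempty := Finset.card_pos.mp (by rw [hT.2]; omega)
  obtain ⟨x, hx⟩ := hne
  exact ⟨x, hx, ⟨hT.1.subset (by simp [Finset.erase_subset]),
    by simp [Finset.card_erase_of_mem hx, hT.2]⟩⟩

open scoped Classical in
lemma cc_succ_eq_zero {A : Finset V} {j : ℕ} (h : cc G A j = 0) : cc G A (j+1) = 0 := by
  rw [cc, Finset.card_eq_zero] at h ⊢
  rw [Finset.filter_eq_empty_iff] at h ⊢
  rintro T - ⟨hT, hTA⟩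
  obtain ⟨x, hx, hT'⟩ := clique_erase G hT
  exact h (Finset.mem_univ _) ⟨hT', (Finset.erase_subset x T).trans hTA⟩

open scoped Classical in
lemma pointwise (B : Finset V) (t : ℕ) :
    ((t:ℤ)+1) * cc G B (t+1) ≤ ((B.card : ℤ) - t) * cc G B t := by
  by_cases hBt : B.card < t
  · have h1 : cc G B t = 0 := by
      rw [cc, Finset.card_eq_zero, Finset.filter_eq_empty_iff]
      rintro T - ⟨hT, hTA⟩
      have := Finset.card_le_card hTA
      have := hT.2
      omega
    have h2 := cc_succ_eq_zero G h1
    rw [h1, h2]; simp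
  push_neg at hBt
  -- nat version
  have key : (t+1) * cc G B (t+1) ≤ (B.card - t) * cc G B t := by
    classical
    set 𝒯 := Finset.univ.filter (fun T : Finset V => G.IsNClique (t+1) T ∧ T ⊆ B) with h𝒯
    set 𝒮 := Finset.univ.filter (fun T : Finset V => G.IsNClique t T ∧ T ⊆ B) with h𝒮
    have hcard1 : (𝒯.sigma (fun T => T)).card = (t+1) * 𝒯.card := by
      rw [Finset.card_sigma]
      rw [Finset.sum_congr rfl (fun T hT => ?_), Finset.sum_const, smul_eq_mul, mul_comm]
      simp only [h𝒯, Finset.mem_filter] at hT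
      exact hT.2.1.2
    have hcard2 : (𝒮.sigma (fun S => B \ S)).card = (B.card - t) * 𝒮.card := by
      rw [Finset.card_sigma]
      rw [Finset.sum_congr rfl (fun S hS => ?_), Finset.sum_const, smul_eq_mul, mul_comm]
      simp only [h𝒮, Finset.mem_filter] at hS
      rw [Finset.card_sdiff_of_subset hS.2.2, hS.2.1.2]
    set f : (Σ _ : Finset V, V) → (Σ _ : Finset V, V) := fun x => ⟨x.1.erase x.2, x.2⟩ with hf
    have hinj : ∀ x ∈ 𝒯.sigma (fun T => T), f x ∈ 𝒮.sigma (fun S => B \ S) := by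
      rintro ⟨T, x⟩ hx
      simp only [Finset.mem_sigma, h𝒯, Finset.mem_filter] at hx
      obtain ⟨⟨-, hT, hTB⟩, hxT⟩ := hx
      simp only [Finset.mem_sigma, h𝒮, Finset.mem_filter]
      refine ⟨⟨Finset.mem_univ _, ⟨hT.1.subset (by simp [hf, Finset.erase_subset]),
        by simp [hf, Finset.card_erase_of_mem hxT, hT.2]⟩, (Finset.erase_subset _ _).trans hTB⟩, ?_⟩
      exact Finset.mem_sdiff.mpr ⟨hTB hxT, Finset.notMem_erase _ _⟩
    have := Finset.card_le_card_of_injOn f hinj ?_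
    · have e1 : cc G B (t+1) = 𝒯.card := by rw [h𝒯, cc]
      have e2 : cc G B t = 𝒮.card := by rw [h𝒮, cc]
      rw [e1, e2]
      omega
    · rintro ⟨T, x⟩ h1 ⟨T', x'⟩ h2 heq
      simp only [Finset.mem_coe, Finset.mem_sigma] at h1 h2
      simp only [hf, Sigma.mk.inj_iff, heq_eq_eq] at heq
      obtain ⟨he, rfl⟩ := heq
      have : T = T' := by
        rw [← Finset.insert_erase h1.2, ← Finset.insert_erase h2.2, he]
      simp [this]
  have : ((B.card : ℤ) - t) = ((B.card - t : ℕ) : ℤ) := by omega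
  rw [this]
  exact_mod_cast key

open scoped Classical in
lemma link (A : Finset V) (v : V) (hv : v ∈ A) (j : ℕ) :
    (Finset.univ.filter (fun T : Finset V => G.IsNClique (j+1) T ∧ T ⊆ A ∧ v ∈ T)).card
      = cc G (A.filter (fun x => G.Adj v x)) j := by
  rw [cc]
  apply Finset.card_bij' (fun T _ => T.erase v) (fun S _ => insert v S)
  · rintro T hT
    simp only [Finset.mem_filter] at hT
    exact Finset.insert_erase hT.2.2.2
  · rintro S hS
    simp only [Finset.mem_filter, Finset.mem_univ, true_and] at hS
    have hvS : v ∉ S := fun h => G.irrefl (Finset.mem_filter.mp (hS.2 h)).2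
    exact Finset.erase_insert hvS
  · rintro T hT
    simp only [Finset.mem_filter, Finset.mem_univ, true_and] at hT ⊢
    obtain ⟨hcl, hTA, hvT⟩ := hT
    refine ⟨⟨hcl.1.subset (by simp [Finset.erase_subset]),
      by simp [Finset.card_erase_of_mem hvT, hcl.2]⟩, ?_⟩
    intro x hx
    obtain ⟨hxv, hxT⟩ := Finset.mem_erase.mp hx
    exact Finset.mem_filter.mpr ⟨hTA hxT, hcl.1 hvT hxT (Ne.symm hxv)⟩
  · rintro S hS
    simp only [Finset.mem_filter, Finset.mem_univ, true_and] at hS ⊢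
    obtain ⟨hcl, hSB⟩ := hS
    have hvS : v ∉ S := fun h => G.irrefl (Finset.mem_filter.mp (hSB h)).2
    have hadj : ∀ x ∈ S, G.Adj v x := fun x hx => (Finset.mem_filter.mp (hSB hx)).2
    refine ⟨⟨?_, by rw [Finset.card_insert_of_notMem hvS, hcl.2]⟩, ?_, by simp⟩
    · rw [Finset.coe_insert]
      exact hcl.1.insert (fun x hx _ => hadj x hx)
    · intro x hx
      rcases Finset.mem_insert.mp hx with rfl | hx'
      · exact hv
      · exact (Finset.mem_filter.mp (hSB hx')).1

open scoped Classical in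
lemma split_erase (A : Finset V) (v : V) (j : ℕ) :
    cc G A j = cc G (A.erase v) j
      + (Finset.univ.filter (fun T : Finset V => G.IsNClique j T ∧ T ⊆ A ∧ v ∈ T)).card := by
  rw [cc, cc]
  rw [← Finset.card_filter_add_card_filter_not
    (p := fun T : Finset V => v ∈ T) (s := Finset.univ.filter
      (fun T : Finset V => G.IsNClique j T ∧ T ⊆ A))]
  rw [add_comm]
  congr 1
  · congr 1
    ext T
    simp only [Finset.mem_filter, Finset.mem_univ, true_and]
    constructor
    · rintro ⟨⟨h1, h2⟩, h3⟩; exact ⟨h1, Finset.subset_erase.mpr ⟨h2, h3⟩⟩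
    · rintro ⟨h1, h2⟩
      obtain ⟨h2', h3⟩ := Finset.subset_erase.mp h2
      exact ⟨⟨h1, h2'⟩, h3⟩
  · congr 1
    ext T
    simp only [Finset.mem_filter, Finset.mem_univ, true_and]
    tauto

open scoped Classical in
lemma split_sep (A S : Finset V) (hS : S ⊆ A) (j : ℕ) (hj : 1 ≤ j)
    (hsep : ∀ x ∈ S, ∀ y ∈ A, y ∉ S → ¬ G.Adj x y) :
    cc G A j = cc G S j + cc G (A \ S) j := by
  rw [cc, cc, cc]
  rw [← Finset.card_filter_add_card_filter_not
    (p := fun T : Finset V => T ⊆ S) (s := Finset.univ.filter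
      (fun T : Finset V => G.IsNClique j T ∧ T ⊆ A))]
  congr 1
  · congr 1
    ext T
    simp only [Finset.mem_filter, Finset.mem_univ, true_and]
    constructor
    · rintro ⟨⟨h1, _⟩, h3⟩; exact ⟨h1, h3⟩
    · rintro ⟨h1, h2⟩; exact ⟨⟨h1, h2.trans hS⟩, h2⟩
  · congr 1
    ext T
    simp only [Finset.mem_filter, Finset.mem_univ, true_and]
    constructor
    · rintro ⟨⟨h1, h2⟩, h3⟩
      refine ⟨h1, fun x hx => Finset.mem_sdiff.mpr ⟨h2 hx, fun hxS => ?_⟩⟩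
      obtain ⟨y, hyT, hyS⟩ := Finset.not_subset.mp h3
      have hxy : x ≠ y := fun h => hyS (h ▸ hxS)
      exact hsep x hxS y (h2 hyT) hyS (h1.1 hx hyT hxy)
    · rintro ⟨h1, h2⟩
      have hTne : T.Nonempty := Finset.card_pos.mp (by rw [h1.2]; omega)
      refine ⟨⟨h1, fun x hx => (Finset.mem_sdiff.mp (h2 hx)).1⟩, ?_⟩
      obtain ⟨x, hx⟩ := hTne
      exact fun hTS => (Finset.mem_sdiff.mp (h2 hx)).2 (hTS hx)


end Defs

section Cross
variable {G : SimpleGraph V}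

lemma exists_cons_of_len {a b : V} (r : G.Walk a b) (h : 1 ≤ r.length) :
    ∃ (c : V) (h1 : G.Adj a c) (r₂ : G.Walk c b), r = SimpleGraph.Walk.cons h1 r₂ := by
  cases r with
  | nil => simp at h
  | cons ha q => exact ⟨_, ha, q, rfl⟩

lemma supp_zero {a b : V} (p : G.Walk a b) (h : 0 < p.support.length) :
    p.support[0]'h = a := by
  cases p with
  | nil => simp
  | cons ha q => simp

lemma supp_last {a b : V} (p : G.Walk a b) (h : p.length < p.support.length) :
    p.support[p.length]'h = b := by
  have hgl := SimpleGraph.Walk.getLast_support p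
  rw [List.getLast_eq_getElem] at hgl
  have hidx : p.length = p.support.length - 1 := by rw [SimpleGraph.Walk.length_support]; omega
  simp only [hidx]
  exact hgl

lemma cross {u0 vl : V} (p : G.Walk u0 vl) (hp : p.IsPath) (hl2 : 2 ≤ p.length)
    (i : ℕ) (hi : i < p.length)
    (hL : p.support.length = p.length + 1)
    (h1 : G.Adj u0 (p.support[i+1]'(by omega)))
    (h2 : G.Adj vl (p.support[i]'(by omega)))
    {w c : V} (hw : w ∉ p.support) (hc : c ∈ p.support) (hwc : G.Adj w c) :
    ∃ (a b : V) (q : G.Walk a b), q.IsPath ∧ (∀ x ∈ q.support, x = w ∨ x ∈ p.support) ∧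
      q.length = p.length + 1 := by
  classical
  have hnd : p.support.Nodup := hp.support_nodup
  set x := p.support[i]'(by omega) with hxdef
  have hx : x ∈ p.support := List.getElem_mem _
  set q1 := p.takeUntil x hx with hq1def
  have hsp0 : q1.append (p.dropUntil x hx) = p := p.take_spec hx
  have hq1s : q1.support.length = q1.length + 1 := length_support _
  have hlen0 : q1.length + (p.dropUntil x hx).length = p.length := by
    conv_rhs => rw [← hsp0]
    rw [length_append]
  have hrlen : 1 ≤ (p.dropUntil x hx).length := by
    by_contra h
    have h0 : (p.dropUntil x hx).length = 0 := by omega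
    have hq1l : q1.length = p.length := by omega
    -- then x = vl and q1 = p up to ... derive i = p.length contradiction with hi
    have hb1 : q1.length < p.support.length := by omega
    have e1 : p.support[q1.length]'hb1 = x := by
      have hsupp : p.support = q1.support ++ (p.dropUntil x hx).support.tail := by
        conv_lhs => rw [← hsp0]
        rw [support_append]
      rw [List.getElem_of_eq hsupp, List.getElem_append_left (by omega)]
      have hgl := getLast_support q1
      rw [List.getLast_eq_getElem] at hgl
      simpa [hq1s] using hgl
    have hj' : i < p.support.length := by omega
    have : q1.length = i := (hnd.getElem_inj_iff (hi := hb1) (hj := hj')).mp e1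
    omega
  obtain ⟨d, hxd, r₂, hr⟩ := exists_cons_of_len (p.dropUntil x hx) hrlen
  have hsp : q1.append (SimpleGraph.Walk.cons hxd r₂) = p := by rw [← hr]; exact hsp0
  have hsupp : p.support = q1.support ++ r₂.support := by
    conv_lhs => rw [← hsp]
    rw [support_append, support_cons]
    simp
  have hlen : q1.length + (r₂.length + 1) = p.length := by
    rw [hr] at hlen0
    simpa [length_cons] using hlen0
  have hq1i : q1.length = i := by
    have hb1 : q1.length < p.support.length := by omega
    have e1 : p.support[q1.length]'hb1 = x := by
      rw [List.getElem_of_eq hsupp, List.getElem_append_left (by omega)]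
      have hgl := getLast_support q1
      rw [List.getLast_eq_getElem] at hgl
      simpa [hq1s] using hgl
    have hj' : i < p.support.length := by omega
    exact (hnd.getElem_inj_iff (hi := hb1) (hj := hj')).mp e1
  have hr₂s : r₂.support.length = r₂.length + 1 := length_support _
  have hd : p.support[i+1]'(by omega) = d := by
    rw [List.getElem_of_eq hsupp, List.getElem_append_right (by omega)]
    have hcons : r₂.support = d :: r₂.support.tail := support_eq_cons r₂
    rw [List.getElem_of_eq hcons]
    have h0 : i - q1.length = 0 := by omega
    simp [h0]
  -- the long path R : v0 -> ... -> x, vl -> ... -> d  (Hamiltonian path of the cycle)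
  have hndsplit : q1.support.Nodup ∧ r₂.support.Nodup ∧ q1.support.Disjoint r₂.support := by
    rw [hsupp] at hnd
    exact List.nodup_append'.mp hnd
  set R := q1.append (SimpleGraph.Walk.cons h2.symm r₂.reverse) with hRdef
  have hRsupp : R.support = q1.support ++ r₂.support.reverse := by
    rw [hRdef, support_append, support_cons, List.tail_cons, support_reverse]
  have hRpath : R.IsPath := by
    rw [SimpleGraph.Walk.isPath_def, hRsupp, List.nodup_append]
    refine ⟨hndsplit.1, by simpa using hndsplit.2.1, ?_⟩
    intro a ha b hb hab
    exact hndsplit.2.2 ha (by simpa [hab] using hb)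
  have hu0q1 : u0 ∈ q1.support := start_mem_support _
  have hdr2 : d ∈ r₂.support := start_mem_support _
  have hu0r2 : u0 ∉ r₂.support := fun h => hndsplit.2.2 hu0q1 h
  have hdq1 : d ∉ q1.support := fun h => hndsplit.2.2 h hdr2
  have hu0vl : u0 ≠ vl := by
    intro h
    have h0 : p.support[0]'(by omega) = u0 := supp_zero p (by omega)
    have hll : p.support[p.length]'(by omega) = vl := supp_last p (by omega)
    have := (hnd.getElem_inj_iff (hi := (by omega : 0 < p.support.length))
      (hj := (by omega : p.length < p.support.length))).mp (h0.trans (h.trans hll.symm))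
    omega
  have hedge : s(u0, d) ∉ R.edges := by
    rw [hRdef, edges_append, edges_cons]
    intro hmem
    rcases List.mem_append.mp hmem with hq | hq
    · exact hdq1 (snd_mem_support_of_mem_edges q1 hq)
    · rcases List.mem_cons.mp hq with heq | hq2
      · rw [Sym2.eq_iff] at heq
        rcases heq with ⟨ha, hb⟩ | ⟨ha, hb⟩
        · -- u0 = x and d = vl : then i = 0 and i+1 = p.length, so p.length = 1
          have hi0 : i = 0 := by
            have h0 : p.support[0]'(by omega) = u0 := supp_zero p (by omega)
            exact ((hnd.getElem_inj_iff (hi := (by omega : 0 < p.support.length))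
              (hj := (by omega : i < p.support.length))).mp ((h0.trans ha).trans hxdef)).symm
          have hil : i + 1 = p.length := by
            have hll : p.support[p.length]'(by omega) = vl := supp_last p (by omega)
            exact (hnd.getElem_inj_iff (hi := (by omega : i + 1 < p.support.length))
              (hj := (by omega : p.length < p.support.length))).mp ((hd.trans hb).trans hll.symm)
          omega
        · exact hu0vl ha
      · rw [edges_reverse, List.mem_reverse] at hq2
        exact hu0r2 (fst_mem_support_of_mem_edges r₂ hq2)
  -- the cycle C
  have h1' : G.Adj u0 d := by rw [← hd]; exact h1
  set C := SimpleGraph.Walk.cons h1' R.reverse with hCdef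
  have hCcyc : C.IsCycle := by
    rw [hCdef]
    rw [SimpleGraph.Walk.cons_isCycle_iff]
    refine ⟨hRpath.reverse, ?_⟩
    rw [edges_reverse, List.mem_reverse]
    exact hedge
  have hCsupp : ∀ y, y ∈ C.support ↔ y ∈ p.support := by
    intro y
    rw [hCdef, support_cons]
    constructor
    · intro hy
      rcases List.mem_cons.mp hy with rfl | hy
      · rw [hsupp]; exact List.mem_append.mpr (Or.inl hu0q1)
      · rw [support_reverse, List.mem_reverse, hRsupp] at hy
        rw [hsupp]
        rcases List.mem_append.mp hy with h' | h'
        · exact List.mem_append.mpr (Or.inl h')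
        · exact List.mem_append.mpr (Or.inr (by simpa using h'))
    · intro hy
      rw [hsupp] at hy
      refine List.mem_cons.mpr (Or.inr ?_)
      rw [support_reverse, List.mem_reverse, hRsupp]
      rcases List.mem_append.mp hy with h' | h'
      · exact List.mem_append.mpr (Or.inl h')
      · exact List.mem_append.mpr (Or.inr (by simpa using h'))
  have hClen : C.length = p.length + 1 := by
    rw [hCdef, length_cons, length_reverse, hRdef, length_append, length_cons, length_reverse]
    omega
  -- rotate at c
  have hc' : c ∈ C.support := (hCsupp c).mpr hc
  set D := C.rotate c hc' with hDdef
  have hDcyc : D.IsCycle := hCcyc.rotate hc'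
  have hDlen : D.length = p.length + 1 := by
    have hperm := (rotate_darts C c hc').perm
    have := hperm.length_eq
    rw [length_darts, length_darts] at this
    rw [hDdef, this, hClen]
  have hDtail : ∀ y ∈ D.support.tail, y ∈ p.support := by
    intro y hy
    have hrot := support_rotate C c hc'
    have : y ∈ C.support.tail := (hrot.perm.mem_iff).mp hy
    exact (hCsupp y).mp (List.mem_of_mem_tail this)
  rcases hD : D with _ | ⟨hcd', D'⟩
  · rw [hD] at hDlen; simp at hDlen
  · rename_i d'
    rw [hD] at hDcyc hDlen hDtail
    have hD'path : D'.IsPath := ((SimpleGraph.Walk.cons_isCycle_iff D' hcd').mp hDcyc).1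
    have hD'supp : ∀ y ∈ D'.support, y ∈ p.support := by
      intro y hy
      apply hDtail
      rw [support_cons, List.tail_cons]
      exact hy
    refine ⟨w, d', SimpleGraph.Walk.cons hwc D'.reverse, ?_, ?_, ?_⟩
    · rw [SimpleGraph.Walk.cons_isPath_iff]
      refine ⟨hD'path.reverse, fun hmem => ?_⟩
      rw [support_reverse, List.mem_reverse] at hmem
      exact hw (hD'supp w hmem)
    · intro y hy
      rw [support_cons] at hy
      rcases List.mem_cons.mp hy with rfl | hy
      · exact Or.inl rfl
      · rw [support_reverse, List.mem_reverse] at hy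
        exact Or.inr (hD'supp y hy)
    · rw [length_cons, length_reverse]
      rw [length_cons] at hDlen
      omega

end Cross

section Main
variable (G : SimpleGraph V)

open scoped Classical in
theorem main (s₀ : ℕ) (A : Finset V) (hex : ∃ T, G.IsNClique (s₀+1) T ∧ T ⊆ A) :
    ((s₀:ℤ)+2) * cc G A (s₀+2) ≤ (cc G A (s₀+1) : ℤ) * ((pml G A : ℤ) - s₀)
      ∧ s₀ ≤ pml G A := by
  induction A using Finset.strongInduction with
  | _ A IH =>
  obtain ⟨T, hT, hTA⟩ := hex
  have hTne : T.Nonempty := Finset.card_pos.mp (by rw [hT.2]; omega)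
  have hAne : A.Nonempty := hTne.mono hTA
  obtain ⟨ua, va, pa, hpa, hsa, hla⟩ := clique_path G T hTne hT.1
  have hls : s₀ ≤ pml G A := by
    have h1 := le_pml G hpa (fun x hx => hTA (hsa x hx))
    have h2 := hT.2
    omega
  refine ⟨?_, hls⟩
  have hccpos : 1 ≤ cc G A (s₀+1) := cc_pos G hT hTA
  -- helper for strictly smaller vertex sets
  have step : ∀ A' : Finset V, A' ⊂ A →
      ((s₀:ℤ)+2) * cc G A' (s₀+2) ≤ (cc G A' (s₀+1) : ℤ) * ((pml G A : ℤ) - s₀) := by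
    intro A' hA'
    by_cases hcl : ∃ T', G.IsNClique (s₀+1) T' ∧ T' ⊆ A'
    · obtain ⟨hineq, hge⟩ := IH A' hA' hcl
      refine hineq.trans ?_
      have hmono : pml G A' ≤ pml G A := by
        obtain ⟨T', hT', hT'A⟩ := hcl
        have hne : T'.Nonempty := Finset.card_pos.mp (by rw [hT'.2]; omega)
        exact pml_mono G (hne.mono hT'A) hA'.subset
      have hnn : (0:ℤ) ≤ (cc G A' (s₀+1) : ℤ) := by positivity
      have : ((pml G A' : ℤ) - s₀) ≤ ((pml G A : ℤ) - s₀) := by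
        have := hmono; omega
      exact mul_le_mul_of_nonneg_left this hnn
    · have h1 : cc G A' (s₀+1) = 0 := by
        rw [cc, Finset.card_eq_zero, Finset.filter_eq_empty_iff]
        rintro T' - ⟨h1, h2⟩
        exact hcl ⟨T', h1, h2⟩
      have h2 : cc G A' (s₀+2) = 0 := cc_succ_eq_zero G h1
      rw [h2]
      have hnn : (0:ℤ) ≤ (cc G A' (s₀+1) : ℤ) := by positivity
      have hnn2 : (0:ℤ) ≤ (pml G A : ℤ) - s₀ := by omega
      simp only [Nat.cast_zero, mul_zero]
      positivity
  by_cases hdel : ∃ v ∈ A, ((s₀:ℤ)+2) *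
      ((Finset.univ.filter (fun T : Finset V =>
        G.IsNClique (s₀+2) T ∧ T ⊆ A ∧ v ∈ T)).card : ℤ) ≤
      ((Finset.univ.filter (fun T : Finset V =>
        G.IsNClique (s₀+1) T ∧ T ⊆ A ∧ v ∈ T)).card : ℤ) * ((pml G A : ℤ) - s₀)
  -- Case 1 : delete the vertex v
  · obtain ⟨v, hv, hineq⟩ := hdel
    have e1 := split_erase G A v (s₀+2)
    have e2 := split_erase G A v (s₀+1)
    have hstep := step (A.erase v) (Finset.erase_ssubset hv)
    rw [e1, e2]
    push_cast
    linarith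
  -- Case 2
  · push_neg at hdel
    -- degree bound
    have hdeg : ∀ v ∈ A, (pml G A : ℤ) + 1 ≤ 2 * ((A.filter (fun x => G.Adj v x)).card : ℤ) := by
      intro v hv
      have hlk1 := link G A v hv (s₀+1)
      have hlk0 := link G A v hv s₀
      set B := A.filter (fun x => G.Adj v x) with hBdef
      have hpw := pointwise G B s₀
      have hcase := hdel v hv
      rw [hlk1, hlk0] at hcase
      have he₀ : 1 ≤ cc G B s₀ := by
        by_contra hcon
        have h0 : cc G B s₀ = 0 := by omega
        have h1 : cc G B (s₀+1) = 0 := cc_succ_eq_zero G h0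
        rw [h0, h1] at hcase
        simp at hcase
      -- cancel cc G B s₀
      have hmul : (((s₀:ℤ)+1) * ((pml G A : ℤ) - s₀)) * (cc G B s₀ : ℤ)
          < (((s₀:ℤ)+2) * ((B.card : ℤ) - s₀)) * (cc G B s₀ : ℤ) := by
        nlinarith [hcase, hpw]
      have hkey : ((s₀:ℤ)+1) * ((pml G A : ℤ) - s₀) < ((s₀:ℤ)+2) * ((B.card : ℤ) - s₀) :=
        lt_of_mul_lt_mul_right hmul (by positivity)
      by_contra hcon
      push_neg at hcon
      have h2m : 2 * ((B.card) : ℤ) ≤ (pml G A : ℤ) := by omega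
      have hs0 : (0:ℤ) ≤ (s₀:ℤ) := by positivity
      have hm0 : (0:ℤ) ≤ (B.card : ℤ) := by positivity
      nlinarith [mul_le_mul_of_nonneg_left h2m hs0, mul_nonneg hs0 hm0]
    -- longest path
    obtain ⟨u0, vl, p, hp, hsA, hplen⟩ := pml_spec G hAne
    have hu0A : u0 ∈ A := hsA u0 p.start_mem_support
    have hvlA : vl ∈ A := hsA vl p.end_mem_support
    have hnd : p.support.Nodup := hp.support_nodup
    have hLlen : p.support.length = p.length + 1 := length_support p
    -- no extension at the two endpoints
    have hM1 : ∀ w ∈ A, w ∉ p.support → ¬G.Adj w u0 ∧ ¬G.Adj vl w := by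
      intro w hwA hws
      constructor
      · intro hadj
        have hq : (SimpleGraph.Walk.cons hadj p).IsPath := by
          rw [SimpleGraph.Walk.cons_isPath_iff]; exact ⟨hp, hws⟩
        have hle := le_pml G hq (fun x hx => by
          rw [support_cons] at hx
          rcases List.mem_cons.mp hx with rfl | hx
          · exact hwA
          · exact hsA x hx)
        rw [length_cons, hplen] at hle
        omega
      · intro hadj
        have hws' : w ∉ p.reverse.support := by rw [support_reverse, List.mem_reverse]; exact hws
        have hq : (SimpleGraph.Walk.cons hadj.symm p.reverse).IsPath := by
          rw [SimpleGraph.Walk.cons_isPath_iff]; exact ⟨hp.reverse, hws'⟩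
        have hle := le_pml G hq (fun x hx => by
          rw [support_cons] at hx
          rcases List.mem_cons.mp hx with rfl | hx
          · exact hwA
          · exact hsA x (by rwa [support_reverse, List.mem_reverse] at hx))
        rw [length_cons, length_reverse, hplen] at hle
        omega
    -- pml ≥ 1
    have hl1 : 1 ≤ pml G A := by
      have hdeg0 := hdeg u0 hu0A
      have hcard : 1 ≤ (A.filter (fun x => G.Adj u0 x)).card := by
        by_contra hcon
        have : (A.filter (fun x => G.Adj u0 x)).card = 0 := by omega
        rw [this] at hdeg0
        simp at hdeg0
        omega
      obtain ⟨w, hwmem⟩ := Finset.card_pos.mp hcard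
      obtain ⟨hwA, hadj⟩ := Finset.mem_filter.mp hwmem
      have hwsup : w ∈ p.support := by
        by_contra hws
        exact (hM1 w hwA hws).1 hadj.symm
      by_contra hcon
      have hl0 : p.length = 0 := by omega
      have : p.support.length = 1 := by omega
      obtain ⟨a, ha⟩ := List.length_eq_one_iff.mp this
      have hw : w = a := by rw [ha] at hwsup; simpa using hwsup
      have hu : u0 = a := by
        have := p.start_mem_support
        rw [ha] at this; simpa using this
      exact G.irrefl (hw ▸ hu ▸ hadj)
    -- crossing index sets
    set A0 := (Finset.range p.length).filter
      (fun i => ∃ h : i + 1 < p.support.length, G.Adj u0 (p.support[i+1]'h)) with hA0def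
    set B1 := (Finset.range p.length).filter
      (fun i => ∃ h : i < p.support.length, G.Adj vl (p.support[i]'h)) with hB1def
    have hinj1 : (A.filter (fun x => G.Adj u0 x)).card ≤ A0.card := by
      apply Finset.card_le_card_of_injOn (fun w => p.support.idxOf w - 1)
      · intro w hwmem
        obtain ⟨hwA, hadj⟩ := Finset.mem_filter.mp hwmem
        have hwsup : w ∈ p.support := by
          by_contra hws
          exact (hM1 w hwA hws).1 hadj.symm
        have hk : p.support.idxOf w < p.support.length := List.idxOf_lt_length_iff.mpr hwsup
        have hkw : p.support[p.support.idxOf w]'hk = w := List.getElem_idxOf hk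
        have hk0 : p.support.idxOf w ≠ 0 := by
          intro h0
          apply G.irrefl
          simp only [h0] at hkw
          have huw : u0 = w := (supp_zero p (by omega)).symm.trans hkw
          exact huw ▸ hadj
        rw [hA0def, Finset.mem_coe, Finset.mem_filter, Finset.mem_range]
        beta_reduce
        refine ⟨by omega, by omega, ?_⟩
        have hidx : p.support.idxOf w - 1 + 1 = p.support.idxOf w := by omega
        simp only [hidx]
        exact hkw.symm ▸ hadj
      · intro w hw w' hw' heq
        obtain ⟨hwA, hadj⟩ := Finset.mem_filter.mp (Finset.mem_coe.mp hw)
        obtain ⟨hw'A, hadj'⟩ := Finset.mem_filter.mp (Finset.mem_coe.mp hw')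
        have hwsup : w ∈ p.support := by
          by_contra hws; exact (hM1 w hwA hws).1 hadj.symm
        have hw'sup : w' ∈ p.support := by
          by_contra hws; exact (hM1 w' hw'A hws).1 hadj'.symm
        have hk : p.support.idxOf w < p.support.length := List.idxOf_lt_length_iff.mpr hwsup
        have hk' : p.support.idxOf w' < p.support.length := List.idxOf_lt_length_iff.mpr hw'sup
        have hkw : p.support[p.support.idxOf w]'hk = w := List.getElem_idxOf hk
        have hkw' : p.support[p.support.idxOf w']'hk' = w' := List.getElem_idxOf hk'
        have hk0 : p.support.idxOf w ≠ 0 := by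
          intro h0
          apply G.irrefl
          simp only [h0] at hkw
          have huw : u0 = w := (supp_zero p (by omega)).symm.trans hkw
          exact huw ▸ hadj
        have hk0' : p.support.idxOf w' ≠ 0 := by
          intro h0
          apply G.irrefl
          simp only [h0] at hkw'
          have huw : u0 = w' := (supp_zero p (by omega)).symm.trans hkw'
          exact huw ▸ hadj'
        have heq' : p.support.idxOf w - 1 = p.support.idxOf w' - 1 := heq
        have hii : p.support.idxOf w = p.support.idxOf w' := by omega
        simp only [hii] at hkw
        exact hkw.symm.trans hkw'
    have hinj2 : (A.filter (fun x => G.Adj vl x)).card ≤ B1.card := by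
      apply Finset.card_le_card_of_injOn (fun w => p.support.idxOf w)
      · intro w hwmem
        obtain ⟨hwA, hadj⟩ := Finset.mem_filter.mp hwmem
        have hwsup : w ∈ p.support := by
          by_contra hws
          exact (hM1 w hwA hws).2 hadj
        have hk : p.support.idxOf w < p.support.length := List.idxOf_lt_length_iff.mpr hwsup
        have hkw : p.support[p.support.idxOf w]'hk = w := List.getElem_idxOf hk
        have hkl : p.support.idxOf w ≠ p.length := by
          intro h0
          apply G.irrefl
          simp only [h0] at hkw
          have huw : vl = w := (supp_last p (by omega)).symm.trans hkw
          exact huw ▸ hadj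
        rw [hB1def, Finset.mem_coe, Finset.mem_filter, Finset.mem_range]
        beta_reduce
        refine ⟨by omega, hk, ?_⟩
        rw [hkw]
        exact hadj
      · intro w hw w' hw' heq
        obtain ⟨hwA, hadj⟩ := Finset.mem_filter.mp (Finset.mem_coe.mp hw)
        obtain ⟨hw'A, hadj'⟩ := Finset.mem_filter.mp (Finset.mem_coe.mp hw')
        have hwsup : w ∈ p.support := by
          by_contra hws; exact (hM1 w hwA hws).2 hadj
        have hw'sup : w' ∈ p.support := by
          by_contra hws; exact (hM1 w' hw'A hws).2 hadj'
        have hk : p.support.idxOf w < p.support.length := List.idxOf_lt_length_iff.mpr hwsup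
        have hk' : p.support.idxOf w' < p.support.length := List.idxOf_lt_length_iff.mpr hw'sup
        have hkw : p.support[p.support.idxOf w]'hk = w := List.getElem_idxOf hk
        have hkw' : p.support[p.support.idxOf w']'hk' = w' := List.getElem_idxOf hk'
        have heq' : p.support.idxOf w = p.support.idxOf w' := heq
        simp only [heq'] at hkw
        exact hkw.symm.trans hkw'
    -- find the crossing index
    have hcross : (A0 ∩ B1).Nonempty := by
      rw [← Finset.card_pos]
      have hU : (A0 ∪ B1).card ≤ p.length := by
        have : A0 ∪ B1 ⊆ Finset.range p.length := by
          apply Finset.union_subset <;>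
            · intro x hx
              exact Finset.mem_of_mem_filter x hx
        simpa using Finset.card_le_card this
      have hsum := Finset.card_union_add_card_inter A0 B1
      have hd0 := hdeg u0 hu0A
      have hdl := hdeg vl hvlA
      have h1 : p.length + 1 ≤ (A.filter (fun x => G.Adj u0 x)).card
          + (A.filter (fun x => G.Adj vl x)).card := by
        have : (pml G A : ℤ) = (p.length : ℤ) := by exact_mod_cast hplen.symm
        omega
      omega
    obtain ⟨i, hicross⟩ := hcross
    obtain ⟨hiA0, hiB1⟩ := Finset.mem_inter.mp hicross
    have hirange : i < p.length := Finset.mem_range.mp (Finset.mem_of_mem_filter i hiA0)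
    obtain ⟨hbi1, hadj1⟩ := (Finset.mem_filter.mp hiA0).2
    obtain ⟨hbi2, hadj2⟩ := (Finset.mem_filter.mp hiB1).2
    -- no edges leaving the support of p at all
    have hM2 : ∀ w ∈ A, w ∉ p.support → ∀ c ∈ p.support, ¬G.Adj w c := by
      intro w hwA hws c hcs hwc
      by_cases hl2 : 2 ≤ p.length
      · obtain ⟨a, b, q, hq, hqs, hqlen⟩ := cross p hp hl2 i hirange hLlen hadj1 hadj2 hws hcs hwc
        have hle := le_pml G hq (fun x hx => by
          rcases hqs x hx with rfl | hx
          · exact hwA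
          · exact hsA x hx)
        omega
      · -- p.length = 1
        have hpl1 : p.length = 1 := by omega
        have hcidx : ∃ k, ∃ hk : k < p.support.length, p.support[k]'hk = c :=
          List.mem_iff_getElem.mp hcs
        obtain ⟨k, hk, hkc⟩ := hcidx
        have hk2 : k = 0 ∨ k = 1 := by omega
        rcases hk2 with rfl | rfl
        · have : p.support[0]'hk = u0 := supp_zero p hk
          rw [this] at hkc
          exact (hM1 w hwA hws).1 (hkc ▸ hwc)
        · have h1 : p.support[p.length]'(by omega) = vl := supp_last p (by omega)
          simp only [hpl1] at h1
          have hvc : vl = c := h1.symm.trans hkc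
          rw [← hvc] at hwc
          exact (hM1 w hwA hws).2 hwc.symm
    -- split along S = support of p
    set S := p.support.toFinset with hSdef
    have hScard : S.card = p.length + 1 := by
      rw [hSdef, List.toFinset_card_of_nodup hnd, hLlen]
    have hSA : S ⊆ A := fun x hx => hsA x (List.mem_toFinset.mp hx)
    have hSne : S.Nonempty := ⟨u0, List.mem_toFinset.mpr p.start_mem_support⟩
    have hsep : ∀ x ∈ S, ∀ y ∈ A, y ∉ S → ¬G.Adj x y := by
      intro x hx y hyA hyS hadj
      exact hM2 y hyA (fun h => hyS (List.mem_toFinset.mpr h)) x (List.mem_toFinset.mp hx)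
        hadj.symm
    have e1 := split_sep G A S hSA (s₀+2) (by omega) hsep
    have e2 := split_sep G A S hSA (s₀+1) (by omega) hsep
    have hpw := pointwise G S (s₀+1)
    have hstep := step (A \ S) (Finset.sdiff_ssubset hSA hSne)
    rw [e1, e2]
    rw [hScard] at hpw
    have hidx2 : s₀+1+1 = s₀+2 := rfl
    rw [hidx2] at hpw
    have hplen' : (pml G A : ℤ) = (p.length : ℤ) := by exact_mod_cast hplen.symm
    rw [hplen'] at hstep ⊢
    push_cast
    push_cast at hpw
    linarith

end Main

end PathCliqueProof


/-- `cliqueCount G j` is `N_j(G)`, the number of `j`-vertex cliques (copies of `K_j`) in `G`. -/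
noncomputable def cliqueCount {V : Type*} (G : SimpleGraph V) (j : ℕ) : ℕ :=
  Set.ncard {s : Finset V | G.IsNClique j s}

/-- For `1 ≤ s ≤ ω(G)`, the graph `G` contains a path of length `l` (number of edges)
satisfying `N_s(G) · (l - s + 1) ≥ (s+1) · N_{s+1}(G)`, i.e. a path with at least
`(s+1)·N_{s+1}(G)/N_s(G) + s - 1` edges. -/
theorem path_of_cliqueCounts {V : Type*} [Fintype V] (G : SimpleGraph V) (s : ℕ)
    (hs1 : 1 ≤ s) (hsω : s ≤ G.cliqueNum) :
    ∃ (u v : V) (p : G.Walk u v), p.IsPath ∧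
      ((s + 1 : ℤ) * cliqueCount G (s + 1) ≤
        (cliqueCount G s : ℤ) * ((p.length : ℤ) - s + 1)) := by
  classical
  obtain ⟨s₀, rfl⟩ : ∃ s₀, s = s₀ + 1 := ⟨s - 1, by omega⟩
  obtain ⟨W, hW⟩ := G.exists_isNClique_cliqueNum
  have hsW : s₀ + 1 ≤ W.card := by rw [hW.2]; exact hsω
  obtain ⟨T, hTW, hTcard⟩ := Finset.exists_subset_card_eq hsW
  have hT : G.IsNClique (s₀+1) T := ⟨hW.1.subset (by exact_mod_cast hTW), hTcard⟩
  obtain ⟨hineq, hge⟩ :=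
    PathCliqueProof.main G s₀ Finset.univ ⟨T, hT, Finset.subset_univ T⟩
  have hTne : T.Nonempty := Finset.card_pos.mp (by rw [hTcard]; omega)
  have hAne : (Finset.univ : Finset V).Nonempty :=
    ⟨hTne.choose, Finset.mem_univ _⟩
  obtain ⟨u, v, p, hp, hsup, hlen⟩ := PathCliqueProof.pml_spec G hAne
  refine ⟨u, v, p, hp, ?_⟩
  have hconv : ∀ j : ℕ, cliqueCount G j = PathCliqueProof.cc G Finset.univ j := by
    intro j
    have hset : {T : Finset V | G.IsNClique j T}
        = ↑(Finset.univ.filter (fun T : Finset V => G.IsNClique j T ∧ T ⊆ Finset.univ)) := by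
      ext T
      simp [Finset.subset_univ]
    rw [cliqueCount, hset, Set.ncard_coe_finset, PathCliqueProof.cc]
  have h1 : cliqueCount G (s₀ + 1 + 1) = PathCliqueProof.cc G Finset.univ (s₀+2) := hconv _
  have h2 : cliqueCount G (s₀ + 1) = PathCliqueProof.cc G Finset.univ (s₀+1) := hconv _
  rw [h1, h2]
  have hlen' : ((PathCliqueProof.pml G Finset.univ : ℕ) : ℤ) = (p.length : ℤ) := by
    exact_mod_cast hlen.symm
  rw [hlen'] at hineq
  push_cast at hineq ⊢
  linarith
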